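/- Let L > m > 0, let ᾱ(β) be defined by ᾱ(β) = 2(1+β)/L for β ≤ (√(L/m) − √(L/m−1))² and ᾱ(β) = 2(1−β)²/((1+β)(L+m) − 4√(βLm)) otherwise, and suppose 0 ≤ β < 1 and 0 < α < ᾱ(β). Set γ_m = mα − 1 − β and γ_L = Lα − 1 − β. Then: (i) the polynomial z² + γ_m z + β has both roots strictly inside the unit circle, and (ii) for every ω ∈ ℝ, Re[(e^{2jω} + γ_L e^{jω} + β) · conj(e^{2jω} + γ_m e^{jω} + β)] > 0; i.e. the transfer function H(z) = (z² + γ_L z + β)/(z² + γ_m z + β) is strictly positive real. -/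

import Mathlib

open Real Complex

/-- The GHB stepsize bound `ᾱ(β)` of Theorem `T.SPR`. -/
noncomputable def alphaBar (m L β : ℝ) : ℝ :=
  if β ≤ (Real.sqrt (L / m) - Real.sqrt (L / m - 1)) ^ 2 then
    2 * (1 + β) / L
  else
    2 * (1 - β) ^ 2 / ((1 + β) * (L + m) - 4 * Real.sqrt (β * L * m))

set_option maxHeartbeats 2000000 in
/-- Core real inequalities: the Schur bound `mα < 2(1+β)` and positivity of the
quadratic `F(x) = 4βx² + (2(1-β)² - α(L+m)(1+β))x + Lmα²` on `[0,2]`. -/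
lemma heavy_ball_aux_main (m L α β : ℝ) (hm : 0 < m) (hmL : m < L)
    (hβ0 : 0 ≤ β) (hβ1 : β < 1) (hα0 : 0 < α) (hα1 : α < alphaBar m L β) :
    m * α < 2 * (1 + β) ∧
    ∀ x : ℝ, 0 ≤ x → x ≤ 2 →
      0 < 4 * β * x ^ 2 + (2 * (1 - β) ^ 2 - α * (L + m) * (1 + β)) * x + L * m * α ^ 2 := by
  have hL : 0 < L := hm.trans hmL
  set t := Real.sqrt β with hts
  set a := Real.sqrt L with has
  set c := Real.sqrt m with hcs
  have ht0 : 0 ≤ t := Real.sqrt_nonneg β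
  have ht2 : t ^ 2 = β := Real.sq_sqrt hβ0
  have ha0 : 0 < a := Real.sqrt_pos.mpr hL
  have ha2 : a ^ 2 = L := Real.sq_sqrt hL.le
  have hc0 : 0 < c := Real.sqrt_pos.mpr hm
  have hc2 : c ^ 2 = m := Real.sq_sqrt hm.le
  have hca : c < a := Real.sqrt_lt_sqrt hm.le hmL
  have hac2 : (a * c) ^ 2 = L * m := by rw [mul_pow, ha2, hc2]
  have hLm2ac : 2 * (a * c) < L + m := by nlinarith [sq_nonneg (a - c)]
  unfold alphaBar at hα1
  split_ifs at hα1 with hth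
  · -- case A : β ≤ threshold, α < 2(1+β)/L
    have hLα : L * α < 2 * (1 + β) := by
      have := (lt_div_iff₀ hL).mp hα1
      linarith
    have hmα : m * α < 2 * (1 + β) := by nlinarith [mul_lt_mul_of_pos_right hmL hα0]
    -- threshold inequality:  2t(1+β)(L+m) ≤ a*c*(β²+6β+1)
    have hkey : 2 * t * (1 + β) * (L + m) ≤ a * c * (β ^ 2 + 6 * β + 1) := by
      set p := Real.sqrt (L / m) with hps
      set q := Real.sqrt (L / m - 1) with hqs
      have hLm1 : (1:ℝ) < L / m := (one_lt_div hm).mpr hmL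
      have hp2 : p ^ 2 = L / m := Real.sq_sqrt (by linarith)
      have hq2 : q ^ 2 = L / m - 1 := Real.sq_sqrt (by linarith)
      have hp0 : 0 ≤ p := Real.sqrt_nonneg _
      have hq0 : 0 ≤ q := Real.sqrt_nonneg _
      have hqp : q < p := by nlinarith
      have htpq : t ≤ p - q := by
        have h := Real.sqrt_le_sqrt hth
        rwa [Real.sqrt_sq (by linarith)] at h
      have hquad : 0 ≤ t ^ 2 - 2 * p * t + 1 := by
        linarith [mul_nonneg (sub_nonneg.mpr htpq)
          (show (0:ℝ) ≤ p + q - t by linarith), hp2, hq2]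
      have hp1 : 1 < p := by nlinarith [hp2, hLm1, hp0, sq_nonneg (p - 1)]
      have hpc : p * c = a := by
        rw [hps, hcs, has, ← Real.sqrt_mul (by positivity), div_mul_cancel₀ _ hm.ne']
      have hprod : (2 * t * p - (t ^ 2 + 1)) * ((t ^ 2 + 1) * p - 2 * t) ≤ 0 := by
        apply mul_nonpos_of_nonpos_of_nonneg
        · linarith
        · nlinarith [mul_nonneg (show (0:ℝ) ≤ t ^ 2 + 1 by positivity)
            (show (0:ℝ) ≤ p - 1 by linarith), sq_nonneg (1 - t)]
      have hpm : p * m = a * c := by linear_combination c * hpc - p * hc2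
      have hp2m : p ^ 2 * m = L := by rw [hp2]; field_simp
      have hidt : m * ((2 * t * p - (t ^ 2 + 1)) * ((t ^ 2 + 1) * p - 2 * t)) =
          2 * t * (t ^ 2 + 1) * (L + m) - (t ^ 4 + 6 * t ^ 2 + 1) * (a * c) := by
        linear_combination (2 * t * (t ^ 2 + 1)) * hp2m - (t ^ 4 + 6 * t ^ 2 + 1) * hpm
      have hle : 2 * t * (t ^ 2 + 1) * (L + m) - (t ^ 4 + 6 * t ^ 2 + 1) * (a * c) ≤ 0 := by
        rw [← hidt]; exact mul_nonpos_of_nonneg_of_nonpos hm.le hprod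
      have e1 : 2 * t * (t ^ 2 + 1) * (L + m) = 2 * t * (1 + β) * (L + m) := by
        rw [ht2]; ring
      have e2 : (t ^ 4 + 6 * t ^ 2 + 1) * (a * c) = (β ^ 2 + 6 * β + 1) * (a * c) := by
        rw [← ht2]; ring
      rw [← e1]
      linarith [hle, e2]
    refine ⟨hmα, ?_⟩
    intro x hx0 hx2
    rcases le_or_gt (2 * (1 - β) ^ 2 - α * (L + m) * (1 + β)) 0 with hb | hb
    · rcases le_or_gt (16 * β + (2 * (1 - β) ^ 2 - α * (L + m) * (1 + β))) 0 with h16 | h16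
      · -- minimum of the convex quadratic on [0,2] is at x = 2
        have hF2 : 0 < (2 * (1 + β) - L * α) * (2 * (1 + β) - m * α) :=
          mul_pos (by linarith) (by linarith)
        nlinarith [mul_nonneg
            (neg_nonneg.mpr h16) (show (0:ℝ) ≤ 2 - x by linarith),
          mul_nonneg hβ0 (sq_nonneg (x - 2))]
      · -- interior vertex: discriminant is negative
        have hq : 8 * β * α * ((1 + β) * (L + m)) ≤
            4 * t * α * (a * c * (β ^ 2 + 6 * β + 1)) := by
          have h := mul_le_mul_of_nonneg_left hkey (show (0:ℝ) ≤ 4 * t * α by positivity)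
          calc 8 * β * α * ((1 + β) * (L + m))
              = 4 * t * α * (2 * t * (1 + β) * (L + m)) := by
                linear_combination (-(8 * α * (1 + β) * (L + m))) * ht2
            _ ≤ 4 * t * α * (a * c * (β ^ 2 + 6 * β + 1)) := h
        have h2 : 0 < (1 - β) ^ 2 * (2 * (β ^ 2 + 6 * β + 1) - α * (1 + β) * (L + m)) := by
          apply mul_pos (pow_pos (by linarith : (0:ℝ) < 1 - β) 2)
          nlinarith
        have hX : 0 < (β ^ 2 + 6 * β + 1) *
            ((2 * (1 - β) ^ 2 - α * (L + m) * (1 + β)) + 4 * t * (a * c) * α) := by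
          nlinarith [hq, h2]
        have hb4 : 0 < (2 * (1 - β) ^ 2 - α * (L + m) * (1 + β)) + 4 * t * (a * c) * α := by
          by_contra hcon
          push_neg at hcon
          nlinarith [mul_nonneg (show (0:ℝ) ≤ β ^ 2 + 6 * β + 1 by positivity)
            (neg_nonneg.mpr hcon)]
        rcases hx0.eq_or_lt with hx | hx
        · rw [← hx]
          nlinarith [mul_pos (mul_pos hL hm) (pow_pos hα0 2)]
        · have hFid : 4 * β * x ^ 2 + (2 * (1 - β) ^ 2 - α * (L + m) * (1 + β)) * x +
                L * m * α ^ 2 =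
              (2 * t * x - a * c * α) ^ 2 +
                ((2 * (1 - β) ^ 2 - α * (L + m) * (1 + β)) + 4 * t * (a * c) * α) * x +
                (L * m - (a * c) ^ 2) * α ^ 2 := by
            linear_combination (-4 * x ^ 2) * ht2
          rw [hFid, hac2]
          nlinarith [sq_nonneg (2 * t * x - a * c * α), mul_pos hb4 hx]
    · nlinarith [mul_nonneg hb.le hx0,
        mul_nonneg (mul_nonneg (by linarith : (0:ℝ) ≤ 4 * β) hx0) hx0,
        mul_pos (mul_pos hL hm) (pow_pos hα0 2)]
  · -- case B : α < 2(1-β)²/D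
    have hst : Real.sqrt (β * L * m) = t * (a * c) := by
      rw [hts, has, hcs, Real.sqrt_mul (by positivity), Real.sqrt_mul hβ0]
      ring
    rw [hst] at hα1
    have hD : 0 < (1 + β) * (L + m) - 4 * (t * (a * c)) := by
      have h1 : 0 < (1 + t ^ 2) * (L + m) - 4 * (t * (a * c)) := by
        nlinarith [mul_nonneg (sq_nonneg (1 - t)) (show (0:ℝ) ≤ 2 * (a * c) by positivity),
          mul_pos (show (0:ℝ) < 1 + t ^ 2 by positivity)
            (show (0:ℝ) < L + m - 2 * (a * c) by linarith)]
      have e : (1 + β) * (L + m) = (1 + t ^ 2) * (L + m) := by rw [ht2]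
      linarith [h1, e]
    have hαD : α * ((1 + β) * (L + m) - 4 * (t * (a * c))) < 2 * (1 - β) ^ 2 :=
      (lt_div_iff₀ hD).mp hα1
    have hmα : m * α < 2 * (1 + β) := by
      have h1 : m * (α * ((1 + β) * (L + m) - 4 * (t * (a * c)))) < m * (2 * (1 - β) ^ 2) :=
        (mul_lt_mul_iff_right₀ hm).mpr hαD
      have hsos : 2 * (1 + β) * ((1 + β) * (L + m) - 4 * (t * (a * c))) -
          m * (2 * (1 - β) ^ 2) = 2 * ((1 + β) * a - 2 * t * c) ^ 2 := by
        linear_combination (-2 * (1 + β) ^ 2) * ha2 - 8 * t ^ 2 * hc2 - 8 * m * ht2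
      have h2 : (m * α) * ((1 + β) * (L + m) - 4 * (t * (a * c))) <
          (2 * (1 + β)) * ((1 + β) * (L + m) - 4 * (t * (a * c))) := by
        nlinarith [sq_nonneg ((1 + β) * a - 2 * t * c)]
      exact lt_of_mul_lt_mul_right h2 hD.le
    refine ⟨hmα, ?_⟩
    intro x hx0 hx2
    have hb4 : 0 < (2 * (1 - β) ^ 2 - α * (L + m) * (1 + β)) + 4 * t * (a * c) * α := by
      nlinarith [hαD]
    rcases hx0.eq_or_lt with hx | hx
    · rw [← hx]
      nlinarith [mul_pos (mul_pos hL hm) (pow_pos hα0 2)]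
    · have hFid : 4 * β * x ^ 2 + (2 * (1 - β) ^ 2 - α * (L + m) * (1 + β)) * x +
          L * m * α ^ 2 =
          (2 * t * x - a * c * α) ^ 2 +
            ((2 * (1 - β) ^ 2 - α * (L + m) * (1 + β)) + 4 * t * (a * c) * α) * x +
            (L * m - (a * c) ^ 2) * α ^ 2 := by
        linear_combination (-4 * x ^ 2) * ht2
      rw [hFid, hac2]
      nlinarith [sq_nonneg (2 * t * x - a * c * α), mul_pos hb4 hx]

/-- Schur stability of `z² + γ z + β` under the Jury conditions. -/
lemma heavy_ball_schur (γm β mα : ℝ) (hβ0 : 0 ≤ β) (hβ1 : β < 1) (hmα0 : 0 < mα)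
    (hmα : mα < 2 * (1 + β)) (hγm : γm = mα - 1 - β)
    (z : ℂ) (hz : z ^ 2 + (γm : ℂ) * z + (β : ℂ) = 0) : ‖z‖ < 1 := by
  have h1 : (z ^ 2 + (γm : ℂ) * z + (β : ℂ)).re = 0 := by rw [hz]; rfl
  have h2 : (z ^ 2 + (γm : ℂ) * z + (β : ℂ)).im = 0 := by rw [hz]; rfl
  simp [pow_two, Complex.mul_re, Complex.mul_im, Complex.add_re, Complex.add_im,
    Complex.ofReal_re, Complex.ofReal_im] at h1 h2
  set x := z.re with hx
  set y := z.im with hy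
  have hre' : x ^ 2 - y ^ 2 + γm * x + β = 0 := by linear_combination h1
  have him' : y * (2 * x + γm) = 0 := by linear_combination h2
  have habs : ‖z‖ ^ 2 = x ^ 2 + y ^ 2 := by
    rw [Complex.sq_norm, Complex.normSq_apply]; ring
  have hlt : x ^ 2 + y ^ 2 < 1 := by
    rcases mul_eq_zero.mp him' with hy0 | hxg
    · rw [hy0]
      have hre'' : x ^ 2 + γm * x + β = 0 := by rw [hy0] at hre'; linarith [hre', sq_nonneg (0:ℝ)]
      have e1 : (x - 1) * (x - β) = -mα * x := by linear_combination hre'' - x * hγm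
      have e2 : (x + 1) * (x + β) = (2 * (1 + β) - mα) * x := by
        linear_combination hre'' - x * hγm
      rcases lt_or_ge x 1 with hx1 | hx1
      · rcases lt_or_ge (-1) x with hx2 | hx2
        · nlinarith [mul_pos (show (0:ℝ) < 1 - x by linarith) (show (0:ℝ) < x + 1 by linarith)]
        · exfalso
          have k1 : 0 ≤ (x + 1) * (x + β) := by
            have := mul_nonneg (show (0:ℝ) ≤ -(x+1) by linarith)
              (show (0:ℝ) ≤ -(x+β) by linarith)
            nlinarith [this]
          have k2 : 0 ≤ (2 * (1 + β) - mα) * (-1 - x) :=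
            mul_nonneg (by linarith) (by linarith)
          nlinarith [e2]
      · exfalso
        have k1 : 0 ≤ (x - 1) * (x - β) := mul_nonneg (by linarith) (by linarith)
        have k2 : 0 ≤ mα * (x - 1) := mul_nonneg hmα0.le (by linarith)
        nlinarith [e1]
    · have hgx : (2 * x + γm) * x = 0 := by rw [hxg]; ring
      linarith [hre', hgx]
  nlinarith [habs, hlt, norm_nonneg z]

/-- On the unit circle, the real part of the transfer function numerator times
the conjugated denominator is the quadratic `F(1 - cos ω)`. -/
lemma heavy_ball_re_eq (α β L m ω : ℝ) :
    ((Complex.exp (2 * ω * Complex.I) + ((L*α-1-β : ℝ) : ℂ) * Complex.exp (ω * Complex.I) +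
        (β : ℂ)) *
      (starRingEnd ℂ)
        (Complex.exp (2 * ω * Complex.I) + ((m*α-1-β : ℝ) : ℂ) * Complex.exp (ω * Complex.I) +
          (β : ℂ))).re
      = 4 * β * (1 - Real.cos ω) ^ 2 +
        (2 * (1 - β) ^ 2 - α * (L + m) * (1 + β)) * (1 - Real.cos ω) + L * m * α ^ 2 := by
  have he : Complex.exp (ω * Complex.I) =
      Complex.ofReal (Real.cos ω) + Complex.ofReal (Real.sin ω) * Complex.I := by
    rw [Complex.exp_mul_I, Complex.ofReal_cos, Complex.ofReal_sin]
  have he2 : Complex.exp (2 * ω * Complex.I) =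
      Complex.exp (ω * Complex.I) * Complex.exp (ω * Complex.I) := by
    rw [← Complex.exp_add]; ring_nf
  have hcs : Real.cos ω ^ 2 + Real.sin ω ^ 2 = 1 := Real.cos_sq_add_sin_sq ω
  rw [he2, he]
  simp [Complex.add_re, Complex.add_im, Complex.mul_re, Complex.mul_im, Complex.ofReal_re,
    Complex.ofReal_im, Complex.I_re, Complex.I_im, map_add, map_mul, Complex.conj_ofReal,
    Complex.conj_I, Complex.cos_ofReal_re, Complex.sin_ofReal_re]
  linear_combination (Real.sin ω ^ 2 + Real.cos ω ^ 2 + 1 + ((L*α-1-β) + (m*α-1-β)) * Real.cos ω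
    - 2*β + (L*α-1-β) * (m*α-1-β)) * hcs

/-- For `0 ≤ β < 1` and `0 < α < ᾱ(β)`, the circle-criterion transfer
function `H(z) = (z² + γ_L z + β)/(z² + γ_m z + β)` of the heavy ball method
is strictly positive real: (i) the denominator is Schur stable, and (ii) the
real part of the numerator times the conjugate denominator is strictly
positive on the unit circle. -/
theorem heavy_ball_transfer_function_spr (m L : ℝ) (hm : 0 < m) (hmL : m < L)
    (α β : ℝ) (hβ0 : 0 ≤ β) (hβ1 : β < 1) (hα0 : 0 < α) (hα1 : α < alphaBar m L β)
    (γm γL : ℝ) (hγm : γm = m * α - 1 - β) (hγL : γL = L * α - 1 - β) :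
    (∀ z : ℂ, z ^ 2 + (γm : ℂ) * z + (β : ℂ) = 0 → ‖z‖ < 1) ∧
    (∀ ω : ℝ,
      0 < ((Complex.exp (2 * ω * Complex.I) + (γL : ℂ) * Complex.exp (ω * Complex.I) + (β : ℂ)) *
        (starRingEnd ℂ)
          (Complex.exp (2 * ω * Complex.I) + (γm : ℂ) * Complex.exp (ω * Complex.I) + (β : ℂ))).re) := by
  obtain ⟨hmα, hF⟩ := heavy_ball_aux_main m L α β hm hmL hβ0 hβ1 hα0 hα1
  constructor
  · intro z hz
    exact heavy_ball_schur γm β (m * α) hβ0 hβ1 (mul_pos hm hα0) hmα hγm z hz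
  · intro ω
    subst hγm hγL
    rw [heavy_ball_re_eq α β L m ω]
    exact hF (1 - Real.cos ω) (by linarith [Real.cos_le_one ω])
      (by linarith [Real.neg_one_le_cos ω])
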